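/- Let a, b, μ ∈ ℂ with a² − b = μ², b ≠ 0, and let A, B ∈ ℂ satisfy μA + (a − √b)B = 0. For j ≥ 0 define A_j = (a−√b)^{−j−1}(μ^{2j+1} − (a−√b)^{2j+1})A + (a+√b)^{−j−1}(μ^{2j+1} − (a+√b)^{2j+1})B. If A_0 = 0 then A_j = 0 for all j ≥ 0. -/
import Mathlib


/-- Let `a² − b = μ²`, `b ≠ 0` (with fixed square root `sb` of
`b`, `a ± sb ≠ 0`), and `μA + (a − sb)B = 0`.  Define
`A_j = (a−sb)^{−j−1}(μ^{2j+1} − (a−sb)^{2j+1})A + (a+sb)^{−j−1}(μ^{2j+1} − (a+sb)^{2j+1})B`.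
If `A₀ = 0` then `A_j = 0` for all `j ≥ 0`. -/
theorem stmt16 (a b μ sb A B : ℂ)
    (hsb : sb ^ 2 = b) (hb : b ≠ 0)
    (hab : a ^ 2 - b = μ ^ 2)
    (hm : a - sb ≠ 0) (hp : a + sb ≠ 0)
    (hAB : μ * A + (a - sb) * B = 0)
    (h0 : (a - sb) ^ (-(0 : ℤ) - 1) * (μ ^ (2 * 0 + 1) - (a - sb) ^ (2 * 0 + 1)) * A +
      (a + sb) ^ (-(0 : ℤ) - 1) * (μ ^ (2 * 0 + 1) - (a + sb) ^ (2 * 0 + 1)) * B = 0) :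
    ∀ j : ℕ,
      (a - sb) ^ (-(j : ℤ) - 1) * (μ ^ (2 * j + 1) - (a - sb) ^ (2 * j + 1)) * A +
        (a + sb) ^ (-(j : ℤ) - 1) * (μ ^ (2 * j + 1) - (a + sb) ^ (2 * j + 1)) * B = 0 := by
  intro j
  have hpq : μ ^ 2 = (a - sb) * (a + sb) := by rw [← hab, ← hsb]; ring
  have hz : ∀ (x : ℂ) (n : ℕ), x ^ (-(n : ℤ) - 1) = (x ^ (n + 1))⁻¹ := by
    intro x n
    rw [show -(n : ℤ) - 1 = -((n + 1 : ℕ) : ℤ) by push_cast; ring, zpow_neg, zpow_natCast]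
  rw [hz, hz]
  simp only [neg_zero, zero_sub, zpow_neg, zpow_one, mul_zero, zero_add, pow_one] at h0
  -- clear denominators in h0
  have h0' : (μ - (a - sb)) * A * (a + sb) + (μ - (a + sb)) * B * (a - sb) = 0 := by
    field_simp at h0
    linear_combination h0
  have hkey : A * (μ - (a - sb)) = 0 := by
    have h2 : 2 * (a + sb) * (A * (μ - (a - sb))) = 0 := by
      linear_combination h0' - (μ - (a + sb)) * hAB + A * hpq
    rcases mul_eq_zero.1 h2 with h | h
    · rcases mul_eq_zero.1 h with h' | h'
      · exact absurd h' two_ne_zero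
      · exact absurd h' hp
    · exact h
  rcases mul_eq_zero.1 hkey with hA | hmu
  · have hB : B = 0 := by
      have : (a - sb) * B = 0 := by linear_combination hAB - μ * hA
      exact (mul_eq_zero.1 this).resolve_left hm
    simp [hA, hB]
  · have hmu' : μ = a - sb := by linear_combination hmu
    have heq : a - sb = a + sb := by
      have : (a - sb) * (a - sb) = (a - sb) * (a + sb) := by
        linear_combination hpq - (μ + (a - sb)) * hmu
      exact mul_left_cancel₀ hm this
    rw [hmu', heq]
    ring
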